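/- Let F be a field of characteristic 2. In the Witt K-theory K^W_*(F) := K^MW_*(F)/(h), for all a, b ∈ F^× with a + b ≠ 0, the classes ⟦a⟧ satisfy: ⟦a²b⟧ = ⟦b⟧, ⟦a⟧ + ⟦-a⟧ = ⟦1⟧ + ⟦-1⟧, and ⟦a⟧ + ⟦b⟧ = ⟦a+b⟧ + ⟦ab(a+b)⟧. -/

import Mathlib

noncomputable section

/-- Generators of the Milnor–Witt K-theory ring: a symbol `[u]` for each unit `u`
and the element `η`. -/
inductive MWGen (F : Type) [Field F] : Type
  | of : Fˣ → MWGen F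
  | eta : MWGen F

/-- The defining relations KMW1–KMW4 of Milnor–Witt K-theory, imposed on the free
(noncommutative) ℤ-algebra on the generators. -/
inductive MWRel (F : Type) [Field F] :
    FreeAlgebra ℤ (MWGen F) → FreeAlgebra ℤ (MWGen F) → Prop
  | steinberg (a : Fˣ) (h1 : (a : F) ≠ 1) :
      MWRel F
        (FreeAlgebra.ι ℤ (MWGen.of a) *
          FreeAlgebra.ι ℤ (MWGen.of (Units.mk0 (1 - (a : F)) (sub_ne_zero_of_ne h1.symm))))
        0
  | mul_rel (a b : Fˣ) :
      MWRel F (FreeAlgebra.ι ℤ (MWGen.of (a * b)))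
        (FreeAlgebra.ι ℤ (MWGen.of a) + FreeAlgebra.ι ℤ (MWGen.of b) +
          FreeAlgebra.ι ℤ MWGen.eta * FreeAlgebra.ι ℤ (MWGen.of a) *
            FreeAlgebra.ι ℤ (MWGen.of b))
  | comm_rel (u : Fˣ) :
      MWRel F (FreeAlgebra.ι ℤ MWGen.eta * FreeAlgebra.ι ℤ (MWGen.of u))
        (FreeAlgebra.ι ℤ (MWGen.of u) * FreeAlgebra.ι ℤ MWGen.eta)
  | hyp :
      MWRel F
        (FreeAlgebra.ι ℤ MWGen.eta *
          (FreeAlgebra.ι ℤ MWGen.eta * FreeAlgebra.ι ℤ (MWGen.of (-1)) + 2))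
        0

/-- The Milnor–Witt K-theory ring `K^MW_*(F)` (all degrees together). -/
def KMW (F : Type) [Field F] : Type := RingQuot (MWRel F)

instance (F : Type) [Field F] : Ring (KMW F) := inferInstanceAs (Ring (RingQuot (MWRel F)))

/-- The symbol `[u] ∈ K^MW_1(F)`. -/
def mw {F : Type} [Field F] (u : Fˣ) : KMW F :=
  RingQuot.mkRingHom (MWRel F) (FreeAlgebra.ι ℤ (MWGen.of u))

/-- The element `η ∈ K^MW_{-1}(F)`. -/
def mweta (F : Type) [Field F] : KMW F :=
  RingQuot.mkRingHom (MWRel F) (FreeAlgebra.ι ℤ MWGen.eta)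

/-- The degree-`n` homogeneous component of `K^MW_*(F)`: the additive subgroup spanned
by the monomials `η^m [u₁]⋯[u_r]` with `r - m = n`. -/
def KMWcomp (F : Type) [Field F] (n : ℤ) : AddSubgroup (KMW F) :=
  AddSubgroup.closure {x | ∃ (m r : ℕ) (v : Fin r → Fˣ),
    (r : ℤ) - (m : ℤ) = n ∧ x = (mweta F) ^ m * (List.ofFn fun i => mw (v i)).prod}

/-- The hyperbolic element `h = η[-1] + 2 ∈ K^MW_0(F)`. -/
def hKMW (F : Type) [Field F] : KMW F := mweta F * mw (-1) + 2

/-- Witt K-theory `K^W_*(F) := K^MW_*(F)/(h)`. -/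
def KW (F : Type) [Field F] : Type :=
  RingQuot (fun x y : KMW F => x = hKMW F ∧ y = 0)

instance (F : Type) [Field F] : Ring (KW F) :=
  inferInstanceAs (Ring (RingQuot (fun x y : KMW F => x = hKMW F ∧ y = 0)))

/-- The quotient map `K^MW_*(F) → K^W_*(F)`. -/
def kwq (F : Type) [Field F] : KMW F →+* KW F :=
  RingQuot.mkRingHom (fun x y : KMW F => x = hKMW F ∧ y = 0)

/-- The class `⟦a⟧ ∈ K^W_1(F)` of the symbol `[a]`. -/
def kw {F : Type} [Field F] (a : Fˣ) : KW F := kwq F (mw a)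

/-- The degree-`n` homogeneous component of `K^W_*(F)`. -/
def KWcomp (F : Type) [Field F] (n : ℤ) : AddSubgroup (KW F) :=
  AddSubgroup.map (kwq F).toAddMonoidHom (KMWcomp F n)


section Aux

variable {F : Type} [Field F]

/-- η in Witt K-theory. -/
noncomputable def ew (F : Type) [Field F] : KW F := kwq F (mweta F)

lemma kw_mul (u v : Fˣ) : kw (u * v) = kw u + kw v + ew F * kw u * kw v := by
  have h : mw (u * v) = mw u + mw v + mweta F * mw u * mw v :=
    by have h0 := RingQuot.mkRingHom_rel (MWRel.mul_rel u v)
       simp only [map_add, map_mul] at h0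
       exact h0
  have h2 := congrArg (kwq F) h
  simpa [kw, ew, map_add, map_mul] using h2

lemma kw_comm (u : Fˣ) : ew F * kw u = kw u * ew F := by
  have h : mweta F * mw u = mw u * mweta F :=
    by have h0 := RingQuot.mkRingHom_rel (MWRel.comm_rel (F := F) u)
       simp only [map_mul] at h0
       exact h0
  have h2 := congrArg (kwq F) h
  simpa [kw, ew, map_mul] using h2

lemma kw_stein (a : Fˣ) (h1 : (a : F) ≠ 1) :
    kw a * kw (Units.mk0 (1 - (a : F)) (sub_ne_zero_of_ne h1.symm)) = 0 := by
  have h : mw a * mw (Units.mk0 (1 - (a : F)) (sub_ne_zero_of_ne h1.symm)) = 0 :=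
    by have h0 := RingQuot.mkRingHom_rel (MWRel.steinberg a h1)
       simp only [map_mul, map_zero] at h0
       exact h0
  have h2 := congrArg (kwq F) h
  simpa [kw, map_mul, map_zero] using h2

lemma kw_stein' (x y : Fˣ) (h1 : (x : F) ≠ 1) (hy : (y : F) = 1 - (x : F)) :
    kw x * kw y = 0 := by
  have : y = Units.mk0 (1 - (x : F)) (sub_ne_zero_of_ne h1.symm) := by
    ext; simpa using hy
  rw [this]; exact kw_stein x h1

lemma kwq_h_zero : kwq F (hKMW F) = 0 := by
  have h := RingQuot.mkRingHom_rel
    (r := fun x y : KMW F => x = hKMW F ∧ y = 0) (x := hKMW F) (y := 0) ⟨rfl, rfl⟩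
  calc kwq F (hKMW F) = kwq F 0 := h
    _ = 0 := map_zero _

lemma kw_h : ew F * kw (-1 : Fˣ) + 2 = 0 := by
  have h := kwq_h_zero (F := F)
  simpa [hKMW, kw, ew, map_add, map_mul, map_ofNat] using h

end Aux

section Aux2

variable {F : Type} [Field F] [CharP F 2]

lemma neg_one_units : (-1 : Fˣ) = 1 := by
  ext; simpa using CharTwo.neg_eq (1 : F)

lemma ew_kw_one : ew F * kw (1 : Fˣ) = -2 := by
  have h := kw_h (F := F)
  rw [neg_one_units] at h
  exact eq_neg_of_add_eq_zero_left h

lemma kw_one : kw (1 : Fˣ) = 0 := by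
  have h := kw_mul (F := F) 1 1
  rw [one_mul, ew_kw_one, neg_mul, two_mul] at h
  abel_nf at h
  simpa using h

lemma two_kw_zero : (2 : KW F) = 0 := by
  have h := ew_kw_one (F := F)
  rw [kw_one, mul_zero] at h
  simpa using h.symm

end Aux2

section Aux3

variable {F : Type} [Field F] [CharP F 2]

lemma kw_inv_rel (u : Fˣ) : kw u + kw u⁻¹ + ew F * kw u * kw u⁻¹ = 0 := by
  have h := kw_mul u u⁻¹
  rw [mul_inv_cancel, kw_one] at h
  exact h.symm

lemma kw_mul_eta (u v : Fˣ) (z : KW F) (hz : kw u * kw v = 0) :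
    kw u * (ew F * kw v * z) = 0 := by
  calc kw u * (ew F * kw v * z) = kw u * ew F * kw v * z := by simp only [mul_assoc]
    _ = ew F * kw u * kw v * z := by rw [← kw_comm]
    _ = ew F * (kw u * kw v) * z := by rw [mul_assoc (ew F)]
    _ = 0 := by rw [hz, mul_zero, zero_mul]

lemma kw_mul_self (u : Fˣ) : kw u * kw u = 0 := by
  by_cases h1 : (u : F) = 1
  · have : u = 1 := Units.ext h1
    rw [this, kw_one, mul_zero]
  · have hinv1 : ((u⁻¹ : Fˣ) : F) ≠ 1 := by
      rw [Units.val_inv_eq_inv_val]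
      exact fun hh => h1 (by rwa [inv_eq_one] at hh)
    set U : Fˣ := Units.mk0 (1 - (u : F)) (sub_ne_zero_of_ne (Ne.symm h1)) with hU
    set D : Fˣ := Units.mk0 (1 - ((u⁻¹ : Fˣ) : F)) (sub_ne_zero_of_ne hinv1.symm) with hD
    have sAU : kw u * kw U = 0 := kw_stein u h1
    have sAD : kw u⁻¹ * kw D = 0 := kw_stein u⁻¹ hinv1
    have Ia := kw_inv_rel (F := F) u
    have ID := kw_inv_rel (F := F) D
    have hAD : kw u * kw D = 0 := by
      have ha' : kw u = -(kw u⁻¹ + ew F * kw u * kw u⁻¹) := by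
        rw [add_assoc] at Ia
        exact eq_neg_of_add_eq_zero_left Ia
      calc kw u * kw D = -(kw u⁻¹ + ew F * kw u * kw u⁻¹) * kw D := by rw [← ha']
        _ = -(kw u⁻¹ * kw D + ew F * kw u * (kw u⁻¹ * kw D)) := by
            rw [neg_mul, add_mul, mul_assoc (ew F * kw u)]
        _ = 0 := by rw [sAD, mul_zero, add_zero, neg_zero]
    have hAC : kw u * kw D⁻¹ = 0 := by
      have hc0 : kw D⁻¹ + (kw D + ew F * kw D * kw D⁻¹) = 0 := by rw [← ID]; abel
      have hc' : kw D⁻¹ = -(kw D + ew F * kw D * kw D⁻¹) :=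
        eq_neg_of_add_eq_zero_left hc0
      calc kw u * kw D⁻¹ = kw u * -(kw D + ew F * kw D * kw D⁻¹) := by rw [← hc']
        _ = -(kw u * kw D + kw u * (ew F * kw D * kw D⁻¹)) := by rw [mul_neg, mul_add]
        _ = 0 := by rw [hAD, kw_mul_eta u D _ hAD, add_zero, neg_zero]
    have key : (1 - (u : F)) * (1 - ((u⁻¹ : Fˣ) : F))⁻¹ = (u : F) := by
      rw [Units.val_inv_eq_inv_val]
      have hu0 : (u : F) ≠ 0 := u.ne_zero
      have hne1 : (1 - (u : F)) ≠ 0 := sub_ne_zero_of_ne (Ne.symm h1)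
      have e1 : 1 - (u : F)⁻¹ = (1 - (u : F)) * (u : F)⁻¹ := by
        rw [sub_mul, one_mul, mul_inv_cancel₀ hu0, CharTwo.sub_eq_add,
          CharTwo.sub_eq_add, add_comm]
      rw [e1, mul_inv_rev, inv_inv, mul_comm (u : F) _, ← mul_assoc,
        mul_inv_cancel₀ hne1, one_mul]
    have hu : u = U * D⁻¹ := by
      apply Units.ext
      rw [Units.val_mul, Units.val_inv_eq_inv_val, hU, hD, Units.val_mk0, Units.val_mk0]
      exact key.symm
    have expand := kw_mul U D⁻¹
    rw [← hu] at expand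
    calc kw u * kw u = kw u * (kw U + kw D⁻¹ + ew F * kw U * kw D⁻¹) := by rw [← expand]
      _ = kw u * kw U + kw u * kw D⁻¹ + kw u * (ew F * kw U * kw D⁻¹) := by
          rw [mul_add, mul_add]
      _ = 0 := by rw [sAU, hAC, kw_mul_eta u U _ sAU, add_zero, add_zero]

lemma kw_sq (u : Fˣ) : kw (u * u) = 0 := by
  rw [kw_mul, mul_assoc, kw_mul_self, mul_zero, add_zero, ← two_mul, two_kw_zero, zero_mul]

end Aux3

theorem stmt17 (F : Type) [Field F] [CharP F 2] (a b : Fˣ)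
    (h : (a : F) + (b : F) ≠ 0) :
    kw (a ^ 2 * b) = kw b ∧
    kw a + kw (-a) = kw (1 : Fˣ) + kw (-1 : Fˣ) ∧
    kw a + kw b =
      kw (Units.mk0 ((a : F) + (b : F)) h) +
        kw (a * b * Units.mk0 ((a : F) + (b : F)) h) := by
  refine ⟨?_, ?_, ?_⟩
  · rw [pow_two, kw_mul (a * a) b, kw_sq, zero_add, mul_zero, zero_mul, add_zero]
  · have hna : -a = a := Units.ext (by rw [Units.val_neg, CharTwo.neg_eq])
    rw [hna, neg_one_units, kw_one, ← two_mul, two_kw_zero, zero_mul, add_zero]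
  · set s : Fˣ := Units.mk0 ((a : F) + (b : F)) h with hs
    set x : Fˣ := a * s⁻¹ with hx
    set y : Fˣ := b * s⁻¹ with hy
    have hxs : x * s = a := inv_mul_cancel_right a s
    have hys : y * s = b := inv_mul_cancel_right b s
    have hxv : (x : F) = (a : F) * ((a : F) + (b : F))⁻¹ := by
      rw [hx, Units.val_mul, Units.val_inv_eq_inv_val, hs, Units.val_mk0]
    have hyv : (y : F) = (b : F) * ((a : F) + (b : F))⁻¹ := by
      rw [hy, Units.val_mul, Units.val_inv_eq_inv_val, hs, Units.val_mk0]
    have hyx : (y : F) = 1 - (x : F) := by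
      rw [hxv, hyv]
      field_simp
      ring
    have hx1 : (x : F) ≠ 1 := by
      rw [hxv]
      intro hh
      rw [mul_inv_eq_one₀ h] at hh
      exact b.ne_zero ((left_eq_add).mp hh)
    have sxy : kw x * kw y = 0 := kw_stein' x y hx1 hyx
    have hss : kw (s * s) = 0 := kw_sq s
    have habs : a * b * s = (x * y) * ((s * s) * s) := by
      rw [← hxs, ← hys]
      apply Units.ext
      simp only [Units.val_mul]
      ring
    have e1 : kw a = kw x + kw s + ew F * kw x * kw s := by rw [← hxs, kw_mul]
    have e2 : kw b = kw y + kw s + ew F * kw y * kw s := by rw [← hys, kw_mul]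
    have e3 : kw (x * y) = kw x + kw y := by
      rw [kw_mul, mul_assoc, sxy, mul_zero, add_zero]
    have e4 : kw ((s * s) * s) = kw s := by
      rw [kw_mul, hss, zero_add, mul_zero, zero_mul, add_zero]
    have e5 : kw (a * b * s) = (kw x + kw y) + kw s + ew F * (kw x + kw y) * kw s := by
      rw [habs, kw_mul, e3, e4]
    rw [e1, e2, e5, mul_add (ew F), add_mul]
    abel
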